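/- Let f₀ : [0,1]^d → ℝ be continuous. For any skip-DHN f with first-layer width p₁ and skip connection vector (s_2,…,s_L), sup_{x ∈ [0,1]^d} |f(x) − f₀(x)| ≥ (sup_{x} f₀(x) − inf_{x} f₀(x)) / (2(p₁+1)·∏_{ℓ=2}^L (s_ℓ+1)). -/

import Mathlib

noncomputable def heaviside (t : ℝ) : ℝ := if 0 ≤ t then 1 else 0

/-- Hidden-layer functions of a skip-connections augmented deep Heaviside
network: `f⁽ℓ⁺¹⁾(x) = σ₀(W_ℓ f⁽ℓ⁾(x) + V_ℓ x − b_ℓ)`. -/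
noncomputable def skipDhnHidden (p : ℕ → ℕ)
    (W : ∀ ℓ : ℕ, Matrix (Fin (p (ℓ + 1))) (Fin (p ℓ)) ℝ)
    (V : ∀ ℓ : ℕ, Matrix (Fin (p (ℓ + 1))) (Fin (p 0)) ℝ)
    (b : ∀ ℓ : ℕ, Fin (p (ℓ + 1)) → ℝ) :
    (ℓ : ℕ) → (Fin (p 0) → ℝ) → Fin (p ℓ) → ℝ
  | 0, x => x
  | (ℓ + 1), x => fun j =>
      heaviside ((W ℓ).mulVec (skipDhnHidden p W V b ℓ x) j + (V ℓ).mulVec x j - b ℓ j)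


lemma heaviside_abs_le (t : ℝ) : |heaviside t| ≤ 1 := by
  unfold heaviside; split_ifs <;> norm_num

/-- `h` is piecewise constant with at most `n` pieces. -/
def PW {α : Type*} (n : ℕ) (h : ℝ → α) : Prop :=
  ∃ τ : ℝ → Fin n, Monotone τ ∧ ∀ t t', τ t = τ t' → h t = h t'

lemma PW.comp {α β : Type*} {n : ℕ} {h : ℝ → α} (hh : PW n h) (G : α → β) :
    PW n (fun t => G (h t)) := by
  obtain ⟨τ, h1, h2⟩ := hh
  exact ⟨τ, h1, fun t t' ht => congrArg G (h2 t t' ht)⟩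

lemma PW.congr {α : Type*} {n : ℕ} {h h' : ℝ → α} (hh : PW n h) (e : ∀ t, h t = h' t) :
    PW n h' := by
  obtain ⟨τ, h1, h2⟩ := hh
  exact ⟨τ, h1, fun t t' ht => by rw [← e, ← e]; exact h2 t t' ht⟩

lemma nat_div_unique {k a b r r' : ℕ} (hr : r < k) (hr' : r' < k)
    (h : a * k + r = b * k + r') : a = b ∧ r = r' := by
  have hab : a = b := by
    rcases Nat.lt_trichotomy a b with h' | h' | h'
    · exfalso
      have h2 : (a + 1) * k ≤ b * k := Nat.mul_le_mul_right k (Nat.succ_le_of_lt h')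
      have h3 : (a + 1) * k = a * k + k := by ring
      linarith
    · exact h'
    · exfalso
      have h2 : (b + 1) * k ≤ a * k := Nat.mul_le_mul_right k (Nat.succ_le_of_lt h')
      have h3 : (b + 1) * k = b * k + k := by ring
      linarith
  subst hab
  exact ⟨rfl, Nat.add_left_cancel h⟩

lemma PW.step {α ι : Type*} [Fintype ι] {n : ℕ} {s' : ℕ} (hs : Fintype.card ι ≤ s')
    {H : ℝ → α} (hH : PW n H) (F : ι → α → ℝ) (A C : ι → ℝ) :
    PW (n * (s' + 1))
      (fun t => ((H t, fun j => heaviside (F j (H t) + A j * t + C j)) : α × (ι → ℝ))) := by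
  classical
  obtain ⟨τ, hτm, hτf⟩ := hH
  let arg : ι → ℝ → ℝ := fun j t => F j (H t) + A j * t + C j
  let bit : ι → ℝ → ℕ := fun j t =>
    if 0 ≤ A j then (if 0 ≤ arg j t then 1 else 0) else (if 0 ≤ arg j t then 0 else 1)
  let σ : ℝ → ℕ := fun t => ∑ j, bit j t
  have hbit1 : ∀ j t, bit j t ≤ 1 := by
    intro j t; simp only [bit]; split_ifs <;> norm_num
  have hσle : ∀ t, σ t ≤ s' := by
    intro t
    calc σ t ≤ ∑ _j : ι, 1 := Finset.sum_le_sum fun j _ => hbit1 j t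
    _ = Fintype.card ι := by simp
    _ ≤ s' := hs
  have hbmono : ∀ t t', t ≤ t' → τ t = τ t' → ∀ j, bit j t ≤ bit j t' := by
    intro t t' htt' hττ j
    have hHt : H t = H t' := hτf t t' hττ
    by_cases hA : 0 ≤ A j
    · have hle : arg j t ≤ arg j t' := by
        simp only [arg, hHt]
        have := mul_le_mul_of_nonneg_left htt' hA
        linarith
      simp only [bit, if_pos hA]
      split_ifs with h1 h2 h3
      · exact le_refl 1
      · exact absurd (le_trans h1 hle) h2
      · exact Nat.zero_le 1
      · exact le_refl 0
    · push_neg at hA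
      have hle : arg j t' ≤ arg j t := by
        simp only [arg, hHt]
        have := mul_le_mul_of_nonpos_left htt' hA.le
        linarith
      simp only [bit, if_neg (not_le.2 hA)]
      split_ifs with h1 h2 h3
      · exact le_refl 0
      · exact Nat.zero_le 1
      · exact absurd (le_trans h3 hle) h1
      · exact le_refl 1
  have hn : ∀ t, (τ t).1 * (s' + 1) + σ t < n * (s' + 1) := by
    intro t
    have h1 : σ t < s' + 1 := Nat.lt_succ_of_le (hσle t)
    have h2 : (τ t).1 + 1 ≤ n := (τ t).2
    calc (τ t).1 * (s' + 1) + σ t < (τ t).1 * (s' + 1) + (s' + 1) := by omega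
    _ = ((τ t).1 + 1) * (s' + 1) := by ring
    _ ≤ n * (s' + 1) := Nat.mul_le_mul_right _ h2
  have key : ∀ t t', t ≤ t' →
      (τ t).1 * (s' + 1) + σ t = (τ t').1 * (s' + 1) + σ t' →
      ((H t, fun j => heaviside (arg j t)) : α × (ι → ℝ))
        = (H t', fun j => heaviside (arg j t')) := by
    intro t t' htt' hval
    obtain ⟨hτv, hσv⟩ :=
      nat_div_unique (Nat.lt_succ_of_le (hσle t)) (Nat.lt_succ_of_le (hσle t')) hval
    have hττ : τ t = τ t' := Fin.ext hτv
    have hHt : H t = H t' := hτf t t' hττ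
    have hbits : ∀ j, bit j t = bit j t' := by
      have := (Finset.sum_eq_sum_iff_of_le (fun j _ => hbmono t t' htt' hττ j)).1 hσv
      intro j; exact this j (Finset.mem_univ j)
    rw [Prod.mk.injEq]
    refine ⟨hHt, funext fun j => ?_⟩
    have hb := hbits j
    have hiff : (0 ≤ arg j t) ↔ (0 ≤ arg j t') := by
      by_cases hA : 0 ≤ A j
      · simp only [bit, if_pos hA] at hb
        split_ifs at hb <;> first | tauto | simp at hb
      · simp only [bit, if_neg hA] at hb
        split_ifs at hb <;> first | tauto | simp at hb
    simp only [heaviside]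
    exact if_congr hiff rfl rfl
  refine ⟨fun t => ⟨(τ t).1 * (s' + 1) + σ t, hn t⟩, ?_, ?_⟩
  · intro t t' htt'
    have hττ := hτm htt'
    rcases eq_or_lt_of_le hττ with h | h
    · have hσm : σ t ≤ σ t' := Finset.sum_le_sum fun j _ => hbmono t t' htt' h j
      have hv : (τ t).1 = (τ t').1 := congrArg Fin.val h
      simp only [Fin.mk_le_mk]
      rw [hv]
      exact Nat.add_le_add_left hσm _
    · have hv : (τ t).1 < (τ t').1 := h
      simp only [Fin.mk_le_mk]
      have h1 : σ t < s' + 1 := Nat.lt_succ_of_le (hσle t)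
      have h2 : ((τ t).1 + 1) * (s' + 1) ≤ (τ t').1 * (s' + 1) :=
        Nat.mul_le_mul_right _ (Nat.succ_le_of_lt hv)
      have h3 : ((τ t).1 + 1) * (s' + 1) = (τ t).1 * (s' + 1) + (s' + 1) := by ring
      have h4 : (0:ℕ) ≤ σ t' := Nat.zero_le _
      linarith
  · intro t t' ht
    have hval : (τ t).1 * (s' + 1) + σ t = (τ t').1 * (s' + 1) + σ t' :=
      congrArg Fin.val ht
    rcases le_total t t' with h | h
    · exact key t t' h hval
    · exact (key t' t h hval.symm).symm

lemma sum_affine {m : ℕ} (R xm xM : Fin m → ℝ) (t : ℝ) :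
    ∑ i, R i * (xm i + t * (xM i - xm i))
      = (∑ i, R i * (xM i - xm i)) * t + ∑ i, R i * xm i := by
  rw [Finset.sum_mul, ← Finset.sum_add_distrib]
  exact Finset.sum_congr rfl fun i _ => by ring


lemma pw_layers (L : ℕ) (p : ℕ → ℕ) (s : ℕ → ℕ)
    (W : ∀ ℓ : ℕ, Matrix (Fin (p (ℓ + 1))) (Fin (p ℓ)) ℝ)
    (V : ∀ ℓ : ℕ, Matrix (Fin (p (ℓ + 1))) (Fin (p 0)) ℝ)
    (b : ∀ ℓ : ℕ, Fin (p (ℓ + 1)) → ℝ)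
    (hV0 : V 0 = 0)
    (hV : ∀ ℓ : ℕ, 1 ≤ ℓ → ℓ + 1 ≤ L →
      (@Finset.filter _ (fun j : Fin (p (ℓ + 1)) => V ℓ j ≠ 0) (fun _ => inferInstance) Finset.univ).card ≤ s (ℓ + 1))
    (xm xM : Fin (p 0) → ℝ) :
    ∀ ℓ : ℕ, 1 ≤ ℓ → ℓ ≤ L →
      PW ((p 1 + 1) * ∏ k ∈ Finset.Icc 2 ℓ, (s k + 1))
        (fun t => skipDhnHidden p W V b ℓ (fun i => xm i + t * (xM i - xm i))) := by
  intro ℓ hℓ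
  induction ℓ, hℓ using Nat.le_induction with
  | base =>
    intro _
    have hprod : ∏ k ∈ Finset.Icc 2 1, (s k + 1) = 1 := by
      rw [Finset.Icc_eq_empty (by omega), Finset.prod_empty]
    rw [hprod, mul_one]
    have h0 : PW 1 (fun _ : ℝ => (() : Unit)) :=
      ⟨fun _ => 0, monotone_const, fun _ _ _ => rfl⟩
    have hstep := h0.step (s' := p 1) (by simp)
      (fun _ _ => (0 : ℝ))
      (fun j => ∑ i, W 0 j i * (xM i - xm i))
      (fun j => (∑ i, W 0 j i * xm i) - b 0 j)
    rw [one_mul] at hstep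
    refine (hstep.comp Prod.snd).congr fun t => ?_
    funext j
    simp only [skipDhnHidden]
    congr 1
    rw [hV0, Matrix.zero_mulVec]
    simp only [Pi.zero_apply, add_zero]
    simp only [Matrix.mulVec, dotProduct]
    rw [sum_affine]
    ring
  | succ ℓ hℓ1 ih =>
    intro hLle
    have prev := ih (le_trans (Nat.le_succ ℓ) hLle)
    classical
    have hs : Fintype.card {j : Fin (p (ℓ + 1)) // V ℓ j ≠ 0} ≤ s (ℓ + 1) := by
      classical
      rw [Fintype.card_subtype]
      convert hV ℓ hℓ1 hLle
    have hstep := prev.step hs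
      (fun j v => (W ℓ).mulVec v ↑j)
      (fun j => ∑ i, V ℓ ↑j i * (xM i - xm i))
      (fun j => (∑ i, V ℓ ↑j i * xm i) - b ℓ ↑j)
    have hcount : ((p 1 + 1) * ∏ k ∈ Finset.Icc 2 ℓ, (s k + 1)) * (s (ℓ + 1) + 1)
        = (p 1 + 1) * ∏ k ∈ Finset.Icc 2 (ℓ + 1), (s k + 1) := by
      rw [Finset.prod_Icc_succ_top (by omega : 2 ≤ ℓ + 1)]
      ring
    rw [hcount] at hstep
    classical
    refine (hstep.comp (fun q j => if h : V ℓ j ≠ 0 then q.2 ⟨j, h⟩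
        else heaviside ((W ℓ).mulVec q.1 j - b ℓ j))).congr fun t => ?_
    funext j
    by_cases h : V ℓ j ≠ 0
    · simp only [dif_pos h, skipDhnHidden]
      congr 1
      have hVt : (V ℓ).mulVec (fun i => xm i + t * (xM i - xm i)) j
          = (∑ i, V ℓ j i * (xM i - xm i)) * t + ∑ i, V ℓ j i * xm i := by
        simp only [Matrix.mulVec, dotProduct]
        exact sum_affine _ _ _ _
      rw [hVt]
      ring
    · push_neg at h
      simp only [dif_neg (not_not.2 h), skipDhnHidden]
      congr 1
      have : (V ℓ).mulVec (fun i => xm i + t * (xM i - xm i)) j = 0 := by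
        simp [Matrix.mulVec, h]
      rw [this]
      ring

lemma skip_abs_le (p : ℕ → ℕ)
    (W : ∀ ℓ : ℕ, Matrix (Fin (p (ℓ + 1))) (Fin (p ℓ)) ℝ)
    (V : ∀ ℓ : ℕ, Matrix (Fin (p (ℓ + 1))) (Fin (p 0)) ℝ)
    (b : ∀ ℓ : ℕ, Fin (p (ℓ + 1)) → ℝ)
    (ℓ : ℕ) (hℓ : 1 ≤ ℓ) (x : Fin (p 0) → ℝ) (j : Fin (p ℓ)) :
    |skipDhnHidden p W V b ℓ x j| ≤ 1 := by
  cases ℓ with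
  | zero => omega
  | succ ℓ => exact heaviside_abs_le _


/-- Lower bound for approximation of a continuous function by a skip-DHN:
the sup-norm error is at least `(sup f₀ − inf f₀)/(2(p₁+1)∏_{ℓ=2}^L (s_ℓ+1))`. -/
theorem skip_dhn_approximation_lower_bound (L : ℕ) (hL : 1 ≤ L)
    (p : ℕ → ℕ) (hd : 1 ≤ p 0) (s : ℕ → ℕ)
    (W : ∀ ℓ : ℕ, Matrix (Fin (p (ℓ + 1))) (Fin (p ℓ)) ℝ)
    (V : ∀ ℓ : ℕ, Matrix (Fin (p (ℓ + 1))) (Fin (p 0)) ℝ)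
    (b : ∀ ℓ : ℕ, Fin (p (ℓ + 1)) → ℝ)
    (hV0 : V 0 = 0)
    (hV : ∀ ℓ : ℕ, 1 ≤ ℓ → ℓ + 1 ≤ L →
      (@Finset.filter _ (fun j : Fin (p (ℓ + 1)) => V ℓ j ≠ 0) (fun _ => inferInstance) Finset.univ).card ≤ s (ℓ + 1))
    (w : Fin (p L) → ℝ) (c : ℝ)
    (f : (Fin (p 0) → ℝ) → ℝ)
    (hf : ∀ x, f x = (∑ j, w j * skipDhnHidden p W V b L x j) - c)
    (f₀ : (Fin (p 0) → ℝ) → ℝ)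
    (hcont : ContinuousOn f₀ (Set.Icc (0 : Fin (p 0) → ℝ) 1)) :
    ((⨆ x : Set.Icc (0 : Fin (p 0) → ℝ) 1, f₀ x) -
        ⨅ x : Set.Icc (0 : Fin (p 0) → ℝ) 1, f₀ x) /
      (2 * ((p 1 + 1) * ∏ ℓ ∈ Finset.Icc 2 L, ((s ℓ : ℝ) + 1))) ≤
      ⨆ x : Set.Icc (0 : Fin (p 0) → ℝ) 1, |f x - f₀ x| := by
    classical
  set K := Set.Icc (0 : Fin (p 0) → ℝ) 1 with hKdef
  have hKcpt : IsCompact K := isCompact_Icc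
  have hKne : K.Nonempty := Set.nonempty_Icc.mpr zero_le_one
  obtain ⟨xM, hxMK, hxMmax'⟩ := hKcpt.exists_isMaxOn hKne hcont
  obtain ⟨xm, hxmK, hxmmin'⟩ := hKcpt.exists_isMinOn hKne hcont
  have hxMmax : ∀ y ∈ K, f₀ y ≤ f₀ xM := isMaxOn_iff.1 hxMmax'
  have hxmmin : ∀ y ∈ K, f₀ xm ≤ f₀ y := isMinOn_iff.1 hxmmin'
  set γ : ℝ → (Fin (p 0) → ℝ) := fun t i => xm i + t * (xM i - xm i) with hγdef
  have hγ0 : γ 0 = xm := by funext i; simp [hγdef]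
  have hγ1 : γ 1 = xM := by funext i; simp [hγdef]
  have hm0 : ∀ i, 0 ≤ xm i := fun i => (Set.mem_Icc.1 hxmK).1 i
  have hm1 : ∀ i, xm i ≤ 1 := fun i => (Set.mem_Icc.1 hxmK).2 i
  have hM0 : ∀ i, 0 ≤ xM i := fun i => (Set.mem_Icc.1 hxMK).1 i
  have hM1 : ∀ i, xM i ≤ 1 := fun i => (Set.mem_Icc.1 hxMK).2 i
  have hγmaps : ∀ t ∈ Set.Icc (0:ℝ) 1, γ t ∈ K := by
    intro t ht
    obtain ⟨ht0, ht1⟩ := ht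
    refine Set.mem_Icc.2 ⟨fun i => ?_, fun i => ?_⟩
    · show (0:ℝ) ≤ xm i + t * (xM i - xm i)
      nlinarith [mul_nonneg (sub_nonneg.2 ht1) (hm0 i), mul_nonneg ht0 (hM0 i)]
    · show xm i + t * (xM i - xm i) ≤ (1:ℝ)
      nlinarith [mul_le_mul_of_nonneg_left (hm1 i) (sub_nonneg.2 ht1),
        mul_le_mul_of_nonneg_left (hM1 i) ht0]
  have hγcont : Continuous γ := by
    apply continuous_pi; intro i
    exact continuous_const.add (continuous_id.mul continuous_const)
  set N := (p 1 + 1) * ∏ k ∈ Finset.Icc 2 L, (s k + 1) with hNdef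
  have hNpos : 0 < N := Nat.mul_pos (Nat.succ_pos _) (Finset.prod_pos fun k _ => Nat.succ_pos _)
  have hNR : (0:ℝ) < (N:ℝ) := by exact_mod_cast hNpos
  have hPW : PW N (fun t => f (γ t)) := by
    have h1 := pw_layers L p s W V b hV0 hV xm xM L hL le_rfl
    exact (h1.comp (fun v => (∑ j, w j * v j) - c)).congr fun t => (hf (γ t)).symm
  obtain ⟨t₀, ht₀mem, ht₀⟩ :
      ∃ t ∈ Set.Icc (0:ℝ) 1, (f₀ xM - f₀ xm) / (2 * N) ≤ |f (γ t) - f₀ (γ t)| := by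
    by_contra hcon
    push_neg at hcon
    set ε := (f₀ xM - f₀ xm) / (2 * N) with hεdef
    have hεpos : 0 < ε :=
      lt_of_le_of_lt (abs_nonneg _) (hcon 0 ⟨le_refl 0, zero_le_one⟩)
    have h2N : (0:ℝ) < 2 * N := by positivity
    have hMm : f₀ xM - f₀ xm = 2 * (N:ℝ) * ε := by
      rw [hεdef]; field_simp
    have hgc : ContinuousOn (fun t => f₀ (γ t)) (Set.Icc (0:ℝ) 1) :=
      hcont.comp hγcont.continuousOn hγmaps
    have hsub := intermediate_value_Icc (zero_le_one (α := ℝ)) hgc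
    rw [hγ0, hγ1] at hsub
    have hvm : ∀ k : Fin (N+1), f₀ xm + 2*ε*((k:ℕ):ℝ) ∈ Set.Icc (f₀ xm) (f₀ xM) := by
      intro k
      have hk : (k:ℕ) ≤ N := Nat.lt_succ_iff.1 k.2
      have hkR : ((k:ℕ):ℝ) ≤ (N:ℝ) := by exact_mod_cast hk
      constructor
      · nlinarith [mul_nonneg (by linarith : (0:ℝ) ≤ 2*ε) (Nat.cast_nonneg (k:ℕ))]
      · nlinarith [mul_le_mul_of_nonneg_left hkR (by linarith : (0:ℝ) ≤ 2*ε)]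
    choose t ht hgt using fun k : Fin (N+1) => hsub (hvm k)
    obtain ⟨τ, hτm, hτf⟩ := hPW
    obtain ⟨k, k', hkk', heq⟩ :=
      Fintype.exists_ne_map_eq_of_card_lt (fun k : Fin (N+1) => τ (t k)) (by simp)
    have hXX : f (γ (t k)) = f (γ (t k')) := hτf _ _ heq
    have h1 : |f (γ (t k)) - (f₀ xm + 2*ε*((k:ℕ):ℝ))| < ε := by
      rw [← hgt k]; exact hcon _ (ht k)
    have h2 : |f (γ (t k)) - (f₀ xm + 2*ε*((k':ℕ):ℝ))| < ε := by
      rw [hXX, ← hgt k']; exact hcon _ (ht k')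
    have hd2 : |(2*ε*((k:ℕ):ℝ)) - (2*ε*((k':ℕ):ℝ))| < 2*ε := by
      have h3 := abs_sub_le (f₀ xm + 2*ε*((k:ℕ):ℝ)) (f (γ (t k))) (f₀ xm + 2*ε*((k':ℕ):ℝ))
      rw [abs_sub_comm (f₀ xm + 2*ε*((k:ℕ):ℝ)) (f (γ (t k)))] at h3
      calc |(2*ε*((k:ℕ):ℝ)) - (2*ε*((k':ℕ):ℝ))|
          = |(f₀ xm + 2*ε*((k:ℕ):ℝ)) - (f₀ xm + 2*ε*((k':ℕ):ℝ))| := by congr 1; ring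
      _ ≤ _ := h3
      _ < 2*ε := by linarith
    have hvne : ((k:ℕ):ℤ) ≠ ((k':ℕ):ℤ) := by
      intro hc
      exact hkk' (Fin.ext (by exact_mod_cast hc))
    have h1abs : (1:ℤ) ≤ |((k:ℕ):ℤ) - ((k':ℕ):ℤ)| := Int.one_le_abs (sub_ne_zero.2 hvne)
    have h1absR : (1:ℝ) ≤ |((k:ℕ):ℝ) - ((k':ℕ):ℝ)| := by exact_mod_cast h1abs
    have hge : 2*ε ≤ |(2*ε*((k:ℕ):ℝ)) - (2*ε*((k':ℕ):ℝ))| := by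
      have he : |(2*ε*((k:ℕ):ℝ)) - (2*ε*((k':ℕ):ℝ))| = 2*ε * |((k:ℕ):ℝ) - ((k':ℕ):ℝ)| := by
        rw [← mul_sub, abs_mul, abs_of_pos (by linarith : (0:ℝ) < 2*ε)]
      rw [he]
      nlinarith
    linarith
  obtain ⟨Cf, hCf⟩ := hKcpt.exists_bound_of_continuousOn hcont
  have hBdd : BddAbove (Set.range fun x : K => |f ↑x - f₀ ↑x|) := by
    refine ⟨(∑ j, |w j|) + |c| + Cf, ?_⟩
    rintro y ⟨x, rfl⟩
    have hfx : |f ↑x| ≤ (∑ j, |w j|) + |c| := by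
      rw [hf]
      calc |(∑ j, w j * skipDhnHidden p W V b L ↑x j) - c|
          ≤ |∑ j, w j * skipDhnHidden p W V b L ↑x j| + |c| := abs_sub _ _
      _ ≤ (∑ j, |w j * skipDhnHidden p W V b L ↑x j|) + |c| := by
            gcongr
            exact Finset.abs_sum_le_sum_abs _ _
      _ ≤ (∑ j, |w j|) + |c| := by
            refine add_le_add_left (Finset.sum_le_sum fun j _ => ?_) _
            rw [abs_mul]
            calc |w j| * |skipDhnHidden p W V b L ↑x j| ≤ |w j| * 1 :=
              mul_le_mul_of_nonneg_left (skip_abs_le p W V b L hL ↑x j) (abs_nonneg _)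
            _ = |w j| := mul_one _
    have hf0x : |f₀ ↑x| ≤ Cf := by
      have h4 := hCf ↑x x.2
      rwa [Real.norm_eq_abs] at h4
    calc |f ↑x - f₀ ↑x| ≤ |f ↑x| + |f₀ ↑x| := abs_sub _ _
    _ ≤ ((∑ j, |w j|) + |c|) + Cf := add_le_add hfx hf0x
  have hnum : (⨆ x : K, f₀ ↑x) - (⨅ x : K, f₀ ↑x) ≤ f₀ xM - f₀ xm := by
    have h1 : (⨆ x : K, f₀ ↑x) ≤ f₀ xM := ciSup_le fun x => hxMmax ↑x x.2
    have h2 : f₀ xm ≤ ⨅ x : K, f₀ ↑x := le_ciInf fun x => hxmmin ↑x x.2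
    linarith
  have hden : (2:ℝ) * ((↑(p 1) + 1) * ∏ ℓ ∈ Finset.Icc 2 L, ((s ℓ:ℝ) + 1)) = 2 * (N:ℝ) := by
    rw [hNdef]; push_cast; ring
  rw [hden]
  calc ((⨆ x : K, f₀ ↑x) - ⨅ x : K, f₀ ↑x) / (2 * (N:ℝ))
      ≤ (f₀ xM - f₀ xm) / (2 * (N:ℝ)) := by gcongr
  _ ≤ |f (γ t₀) - f₀ (γ t₀)| := ht₀
  _ ≤ ⨆ x : K, |f ↑x - f₀ ↑x| := le_ciSup hBdd ⟨γ t₀, hγmaps t₀ ht₀mem⟩
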